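/- Let C(c) = Σᵢ₌₀^∞ bᵢcⁱ with bᵢ ≥ 0 and Σᵢ bᵢ = 1 (so C(1) = 1). Then (1/4)(1 − C'(0)) ≤ max over c ∈ [−1,1] of |C(c) − c| ≤ 2(1 − C'(0)), and max over c ∈ [−1,1] of |C'(c) − 1| ≤ 2(1 − C'(0)) + (C'(1) − 1). -/

import Mathlib

private lemma abs_hasSum_le {a g : ℕ → ℝ} {s t : ℝ}
    (h : ∀ i, |a i| ≤ g i) (ha : HasSum a s) (hg : HasSum g t) : |s| ≤ t := by
  refine abs_le.mpr ⟨?_, ?_⟩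
  · exact hasSum_le (fun i => neg_le_of_abs_le (by simpa [abs_neg] using h i) |>.trans_eq rfl
      |> fun hh => by simpa using (neg_le_of_abs_le (h i) : -g i ≤ a i)) hg.neg ha
  · exact hasSum_le (fun i => (le_abs_self (a i)).trans (h i)) ha hg

theorem deviation_bound (b : ℕ → ℝ) (hb : ∀ i, 0 ≤ b i) (hsum : HasSum b 1)
    (C D : ℝ → ℝ)
    (hC : ∀ c ∈ Set.Icc (-1:ℝ) 1, HasSum (fun i => b i * c ^ i) (C c))
    (hD : ∀ c ∈ Set.Icc (-1:ℝ) 1, HasSum (fun i : ℕ => (i : ℝ) * b i * c ^ (i - 1)) (D c)) :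
    (∃ c ∈ Set.Icc (-1:ℝ) 1, (1 / 4) * (1 - D 0) ≤ |C c - c|) ∧
    (∀ c ∈ Set.Icc (-1:ℝ) 1, |C c - c| ≤ 2 * (1 - D 0)) ∧
    (∀ c ∈ Set.Icc (-1:ℝ) 1, |D c - 1| ≤ 2 * (1 - D 0) + (D 1 - 1)) := by
  have h0 : (0:ℝ) ∈ Set.Icc (-1:ℝ) 1 := by norm_num
  have h1 : (1:ℝ) ∈ Set.Icc (-1:ℝ) 1 := by norm_num
  -- D 0 = b 1
  have hD0 : D 0 = b 1 := by
    have h := hD 0 h0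
    have heq : (fun i : ℕ => (i : ℝ) * b i * (0:ℝ) ^ (i - 1)) =
        (fun i : ℕ => if i = 1 then b 1 else 0) := by
      funext i
      match i with
      | 0 => simp
      | 1 => simp
      | (n+2) => simp [pow_succ]
    rw [heq] at h
    exact h.unique (hasSum_ite_eq 1 (b 1))
  -- sum of b over i ≠ 1
  have hrest : HasSum (fun i : ℕ => if i = 1 then 0 else b i) (1 - b 1) := by
    have h := hsum.sub (hasSum_ite_eq 1 (b 1))
    convert h using 2 with i
    · rfl
    by_cases hi : i = 1 <;> simp [hi]
  refine ⟨⟨-(1/2), by norm_num, ?_⟩, ?_, ?_⟩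
  · -- lower bound at c = -1/2
    have hm : (-(1/2) : ℝ) ∈ Set.Icc (-1:ℝ) 1 := by norm_num
    have hCm : HasSum (fun i : ℕ => b i * (-(1/2):ℝ) ^ i + b i * (1/2))
        (C (-(1/2)) + 1/2) := by
      have := (hC _ hm).add (hsum.mul_right (1/2))
      simpa using this
    have hle : C (-(1/2)) + 1/2 ≥ (1/4) * (1 - b 1) := by
      refine hasSum_le (fun i => ?_) (hrest.mul_left (1/4)) hCm
      match i with
      | 0 => have := hb 0; simp; nlinarith
      | 1 => simp
      | (n+2) =>
        have hbn := hb (n+2)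
        have hpow : |(-(1/2):ℝ) ^ (n+2)| ≤ 1/4 := by
          rw [abs_pow]
          calc |(-(1/2):ℝ)| ^ (n+2) = (1/2:ℝ)^(n+2) := by norm_num
            _ ≤ (1/2:ℝ)^2 := by
                apply pow_le_pow_of_le_one (by norm_num) (by norm_num) (by omega)
            _ = 1/4 := by norm_num
        have h1 : -(1/4) ≤ (-(1/2):ℝ) ^ (n+2) := neg_le_of_abs_le hpow
        have : (n+2:ℕ) ≠ 1 := by omega
        simp only [this, if_false]
        nlinarith
    rw [hD0]
    calc (1/4) * (1 - b 1) ≤ C (-(1/2)) + 1/2 := hle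
      _ ≤ |C (-(1/2)) + 1/2| := le_abs_self _
      _ = |C (-(1/2)) - -(1/2)| := by ring_nf
  · -- |C c - c| ≤ 2 (1 - b 1)
    intro c hc
    rw [hD0]
    have hc1 : |c| ≤ 1 := abs_le.mpr ⟨hc.1, hc.2⟩
    have ha : HasSum (fun i : ℕ => b i * c ^ i - b i * c) (C c - c) := by
      have := (hC c hc).sub (hsum.mul_right c)
      simpa using this
    refine abs_hasSum_le (fun i => ?_) ha (by simpa using hrest.mul_left 2)
    match i with
    | 1 => simp
    | 0 =>
      have h0b := hb 0
      have hcc := abs_le.mp hc1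
      simp only [pow_zero, (by norm_num : (0:ℕ) ≠ 1), if_false]
      rw [abs_le]
      constructor <;> nlinarith
    | (n+2) =>
      have hbn := hb (n+2)
      have hpw : |c ^ (n+2)| ≤ 1 := by
        rw [abs_pow]; exact pow_le_one₀ (abs_nonneg c) hc1
      have : (n+2:ℕ) ≠ 1 := by omega
      simp only [this, if_false]
      calc |b (n+2) * c ^ (n+2) - b (n+2) * c|
          ≤ |b (n+2) * c ^ (n+2)| + |b (n+2) * c| := abs_sub _ _
        _ = b (n+2) * |c ^ (n+2)| + b (n+2) * |c| := by
            rw [abs_mul, abs_mul, abs_of_nonneg hbn]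
        _ ≤ b (n+2) * 1 + b (n+2) * 1 := by
            gcongr
        _ = 2 * b (n+2) := by ring
  · -- |D c - 1| ≤ 2 (1 - b 1) + (D 1 - 1)
    intro c hc
    rw [hD0]
    have hc1 : |c| ≤ 1 := abs_le.mpr ⟨hc.1, hc.2⟩
    have hD1 : HasSum (fun i : ℕ => (i : ℝ) * b i) (D 1) := by
      have := hD 1 h1
      simpa using this
    have ha : HasSum (fun i : ℕ => (i : ℝ) * b i * c ^ (i - 1) - b i) (D c - 1) :=
      (hD c hc).sub hsum
    have hg : HasSum (fun i : ℕ => (i : ℝ) * b i + b i - 2 * (if i = 1 then b 1 else 0))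
        (2 * (1 - b 1) + (D 1 - 1)) := by
      have h := (hD1.add hsum).sub ((hasSum_ite_eq 1 (b 1)).mul_left 2)
      convert h using 1
      · rfl
      ring
    refine abs_hasSum_le (fun i => ?_) ha hg
    match i with
    | 0 => simp [abs_of_nonneg (hb 0)]
    | 1 => simp; linarith
    | (n+2) =>
      have hbn := hb (n+2)
      have hpw : |c ^ (n+1)| ≤ 1 := by
        rw [abs_pow]; exact pow_le_one₀ (abs_nonneg c) hc1
      have hne : (n+2:ℕ) ≠ 1 := by omega
      simp only [hne, if_false, mul_zero, sub_zero]
      have hcast : ((n+2:ℕ):ℝ) = (n:ℝ) + 2 := by push_cast; ring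
      calc |((n+2:ℕ):ℝ) * b (n+2) * c ^ (n+2-1) - b (n+2)|
          ≤ |((n+2:ℕ):ℝ) * b (n+2) * c ^ (n+2-1)| + |b (n+2)| := abs_sub _ _
        _ ≤ ((n:ℝ)+2) * b (n+2) * 1 + b (n+2) := by
            have hsub : (n+2) - 1 = n+1 := by omega
            rw [hsub, abs_mul, abs_mul, abs_of_nonneg hbn, Nat.abs_cast, hcast]
            gcongr
        _ = ((n+2:ℕ):ℝ) * b (n+2) + b (n+2) := by rw [hcast]; ring
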